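/- Let p_0, p_1 : R → R be continuous on [z−r, z+r] with p_1(z) = p_0(z), and suppose p_1 is non-increasing and p_0 is non-decreasing on [z−r, z+r]. Then for all 0 < ε ≤ r/2 there exists a point a ∈ [z−ε, z+ε] with p_1(a+ε) = p_0(a−ε). -/

import Mathlib

theorem exists_solution_near (p₀ p₁ : ℝ → ℝ) (z r : ℝ) (hr : 0 < r)
    (hc₀ : ContinuousOn p₀ (Set.Icc (z - r) (z + r)))
    (hc₁ : ContinuousOn p₁ (Set.Icc (z - r) (z + r)))
    (heq : p₁ z = p₀ z)
    (h₁anti : AntitoneOn p₁ (Set.Icc (z - r) (z + r)))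
    (h₀mono : MonotoneOn p₀ (Set.Icc (z - r) (z + r)))
    (ε : ℝ) (hε : 0 < ε) (hεr : ε ≤ r / 2) :
    ∃ a ∈ Set.Icc (z - ε) (z + ε), p₁ (a + ε) = p₀ (a - ε) := by
  set f : ℝ → ℝ := fun a => p₁ (a + ε) - p₀ (a - ε) with hf
  have hεr' : ε ≤ r := by linarith
  have hmap1 : ∀ a ∈ Set.Icc (z - ε) (z + ε), a + ε ∈ Set.Icc (z - r) (z + r) := by
    intro a ha
    obtain ⟨h1, h2⟩ := ha
    constructor <;> linarith
  have hmap0 : ∀ a ∈ Set.Icc (z - ε) (z + ε), a - ε ∈ Set.Icc (z - r) (z + r) := by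
    intro a ha
    obtain ⟨h1, h2⟩ := ha
    constructor <;> linarith
  have hcf : ContinuousOn f (Set.Icc (z - ε) (z + ε)) := by
    apply ContinuousOn.sub
    · exact (hc₁.comp (continuous_add_right ε).continuousOn hmap1)
    · exact (hc₀.comp (continuous_sub_right ε).continuousOn hmap0)
  have hle : z - ε ≤ z + ε := by linarith
  have hz : z ∈ Set.Icc (z - r) (z + r) := by constructor <;> linarith
  have hz2 : z - 2 * ε ∈ Set.Icc (z - r) (z + r) := by constructor <;> linarith
  have hz3 : z + 2 * ε ∈ Set.Icc (z - r) (z + r) := by constructor <;> linarith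
  have hfa : 0 ≤ f (z - ε) := by
    have : z - ε + ε = z := by ring
    have h2 : z - ε - ε = z - 2 * ε := by ring
    simp only [hf, this, h2, heq]
    have := h₀mono hz2 hz (by linarith)
    linarith
  have hfb : f (z + ε) ≤ 0 := by
    have h1 : z + ε + ε = z + 2 * ε := by ring
    have h2 : z + ε - ε = z := by ring
    simp only [hf, h1, h2]
    have := h₁anti hz hz3 (by linarith)
    linarith
  have := intermediate_value_Icc' hle hcf (Set.mem_Icc.mpr ⟨hfb, hfa⟩)
  obtain ⟨a, ha, hfa0⟩ := this
  exact ⟨a, ha, by simpa [hf, sub_eq_zero] using hfa0⟩
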